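/- Let S = {X_α, p^β_α, α < β < τ} be an almost continuous inverse system with nearly open bonding maps and X = a-lim S. Then X is regularly embedded in the product ∏_{α<τ} X_α. -/

import Mathlib

open Topology Order

universe u

/-- An inverse system of topological spaces indexed by the ordinals below `τ`,
with continuous surjective bonding maps. -/
structure InvSystem (τ : Ordinal.{u}) where
  X : Ordinal.{u} → Type u
  topo : ∀ α, TopologicalSpace (X α)
  p : ∀ α β, α ≤ β → X β → X α
  p_cont : ∀ α β (h : α ≤ β), Continuous (p α β h)
  p_surj : ∀ α β (h : α ≤ β), β < τ → Function.Surjective (p α β h)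
  p_id : ∀ α (x : X α), p α α le_rfl x = x
  p_comp : ∀ α β γ (h₁ : α ≤ β) (h₂ : β ≤ γ) (x : X γ),
    p α β h₁ (p β γ h₂ x) = p α γ (h₁.trans h₂) x

attribute [instance] InvSystem.topo

namespace InvSystem

variable {τ : Ordinal.{u}} (S : InvSystem τ)

/-- The inverse limit of the subsystem indexed by the ordinals below `γ`. -/
def lim (γ : Ordinal.{u}) : Set (∀ α : {o : Ordinal.{u} // o < γ}, S.X α.1) :=
  {f | ∀ (a b : {o : Ordinal.{u} // o < γ}) (h : a.1 ≤ b.1), S.p a.1 b.1 h (f b) = f a}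

/-- The canonical map from `X γ` to the inverse limit of the subsystem below `γ`. -/
def diag (γ : Ordinal.{u}) (x : S.X γ) : ↥(S.lim γ) :=
  ⟨fun a => S.p a.1 γ a.2.le x, fun a b h => S.p_comp a.1 b.1 γ h b.2.le x⟩

/-- The system is almost continuous: for every limit ordinal `γ < τ`, `X γ` embeds
densely into the inverse limit of the subsystem below `γ`, compatibly with the
projections. -/
def AlmostContinuous : Prop :=
  ∀ γ : Ordinal.{u}, γ < τ → Order.IsSuccLimit γ →
    Topology.IsEmbedding (S.diag γ) ∧ DenseRange (S.diag γ)

variable (A : Set (∀ α : {o : Ordinal.{u} // o < τ}, S.X α.1))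

/-- The `α`-th limit projection restricted to `A`. -/
def proj (α : Ordinal.{u}) (h : α < τ) : ↥A → S.X α :=
  fun x => x.1 ⟨α, h⟩

/-- `A` is the almost limit of `S`: it is a subspace of the inverse limit whose
projections are onto the `X α`. -/
def IsALim : Prop :=
  A ⊆ S.lim τ ∧ ∀ (α : Ordinal.{u}) (h : α < τ), Function.Surjective (S.proj A α h)

/-- The rank of a subset `U` of the almost limit `A`. -/
def rank (U : Set ↥A) : Set Ordinal.{u} :=
  {α | ∃ h : succ α < τ,
    (interior ((S.p α (succ α) (le_succ α) ⁻¹'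
        closure (S.proj A α ((lt_succ α).trans h) '' U)) \
      closure (S.proj A (succ α) h '' U))).Nonempty}

end InvSystem

/-- A continuous map is skeletal if the interior of the closure of the image of
every nonempty open set is nonempty. -/
def IsSkeletalMap {X Y : Type*} [TopologicalSpace X] [TopologicalSpace Y] (f : X → Y) : Prop :=
  Continuous f ∧
  ∀ U : Set X, IsOpen U → U.Nonempty → (interior (closure (f '' U))).Nonempty

/-- A continuous map is nearly open if `f(U) ⊆ Int cl f(U)` for every open `U`. -/
def IsNearlyOpenMap {X Y : Type*} [TopologicalSpace X] [TopologicalSpace Y] (f : X → Y) : Prop :=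
  ∀ U : Set X, IsOpen U → f '' U ⊆ interior (closure (f '' U))

namespace RegEmb
open Set InvSystem

variable {τ : Ordinal.{u}} (S : InvSystem τ)

/-- The canonical open set at coordinate `δ` determined by an open set `W` at level `α`. -/
def cSet (α δ : Ordinal.{u}) (h : δ ≤ α) (W : Set (S.X α)) : Set (S.X δ) :=
  interior (closure (S.p δ α h '' W))

lemma isOpen_cSet (α δ : Ordinal.{u}) (h : δ ≤ α) (W : Set (S.X α)) :
    IsOpen (cSet S α δ h W) := isOpen_interior

/-- The accumulated box at level `γ` determined by milestones `J` for `(α, W)`. -/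
def InDset (α γ : Ordinal.{u}) (hγ : γ ≤ α) (W : Set (S.X α)) (J : Finset Ordinal.{u}) :
    Set (S.X γ) :=
  ⋂ δ ∈ J, ⋂ (hδ : δ ≤ γ), S.p δ γ hδ ⁻¹' cSet S α δ (hδ.trans hγ) W

lemma mem_InDset {α γ : Ordinal.{u}} {hγ : γ ≤ α} {W : Set (S.X α)} {J : Finset Ordinal.{u}}
    {y : S.X γ} :
    y ∈ InDset S α γ hγ W J ↔
      ∀ δ ∈ J, ∀ hδ : δ ≤ γ, S.p δ γ hδ y ∈ cSet S α δ (hδ.trans hγ) W := by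
  simp [InDset]

lemma isOpen_InDset (α γ : Ordinal.{u}) (hγ : γ ≤ α) (W : Set (S.X α))
    (J : Finset Ordinal.{u}) : IsOpen (InDset S α γ hγ W J) := by
  refine J.finite_toSet.isOpen_biInter fun δ hδ => ?_
  refine isOpen_iInter_of_finite fun hδγ => ?_
  exact (isOpen_cSet S α δ _ W).preimage (S.p_cont δ γ hδγ)

/-- The good box in the product determined by `(α, W, J)`. -/
def BoxSet (α : Ordinal.{u}) (hα : α < τ) (W : Set (S.X α)) (J : Finset Ordinal.{u}) :
    Set (∀ α : {o : Ordinal.{u} // o < τ}, S.X α.1) :=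
  ((fun z => z ⟨α, hα⟩) ⁻¹' (W ∩ InDset S α α le_rfl W J)) ∩
    ⋂ δ ∈ J, ⋂ (hδ : δ < α), (fun z => z ⟨δ, hδ.trans hα⟩) ⁻¹' InDset S α δ hδ.le W J

lemma mem_BoxSet {α : Ordinal.{u}} {hα : α < τ} {W : Set (S.X α)} {J : Finset Ordinal.{u}}
    {z : ∀ α : {o : Ordinal.{u} // o < τ}, S.X α.1} :
    z ∈ BoxSet S α hα W J ↔
      (z ⟨α, hα⟩ ∈ W ∧ z ⟨α, hα⟩ ∈ InDset S α α le_rfl W J) ∧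
      ∀ δ ∈ J, ∀ hδ : δ < α, z ⟨δ, hδ.trans hα⟩ ∈ InDset S α δ hδ.le W J := by
  simp [BoxSet, and_assoc]

lemma isOpen_BoxSet (α : Ordinal.{u}) (hα : α < τ) (W : Set (S.X α)) (hW : IsOpen W)
    (J : Finset Ordinal.{u}) : IsOpen (BoxSet S α hα W J) := by
  refine IsOpen.inter (IsOpen.preimage (continuous_apply _)
    (hW.inter (isOpen_InDset S α α le_rfl W J))) ?_
  refine J.finite_toSet.isOpen_biInter fun δ hδ => ?_
  refine isOpen_iInter_of_finite fun hδα => ?_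
  exact (isOpen_InDset S α δ hδα.le W J).preimage
    (continuous_apply (⟨δ, hδα.trans hα⟩ : {o : Ordinal.{u} // o < τ}))

/-- Goodness: off the milestones, the image of `W` is dense in the accumulated box. -/
def Good (α : Ordinal.{u}) (W : Set (S.X α)) (J : Finset Ordinal.{u}) : Prop :=
  ∀ γ, ∀ hγ : γ < α, γ ∉ J → InDset S α γ hγ.le W J ⊆ closure (S.p γ α hγ.le '' W)

/-- density holds at every level `γ < α` of a good datum. -/
lemma dens {α : Ordinal.{u}} {W : Set (S.X α)} {J : Finset Ordinal.{u}}
    (good : Good S α W J) (γ : Ordinal.{u}) (hγ : γ < α) :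
    InDset S α γ hγ.le W J ⊆ closure (S.p γ α hγ.le '' W) := by
  by_cases hγJ : γ ∈ J
  · intro y hy
    have := (mem_InDset S).mp hy γ hγJ le_rfl
    rw [S.p_id γ y] at this
    exact interior_subset this
  · exact good γ hγ hγJ

lemma img_comp (δ γ β : Ordinal.{u}) (h1 : δ ≤ γ) (h2 : γ ≤ β) (W : Set (S.X β)) :
    S.p δ β (h1.trans h2) '' W = S.p δ γ h1 '' (S.p γ β h2 '' W) := by
  rw [Set.image_image]
  exact Set.image_congr fun x _ => (S.p_comp δ γ β h1 h2 x).symm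

lemma pre_comp (δ γ β : Ordinal.{u}) (h1 : δ ≤ γ) (h2 : γ ≤ β) (G : Set (S.X δ)) :
    S.p δ β (h1.trans h2) ⁻¹' G = S.p γ β h2 ⁻¹' (S.p δ γ h1 ⁻¹' G) := by
  ext x
  simp [S.p_comp δ γ β h1 h2 x]

/-- key: preimage of the interior of the closure is inside the closure of the preimage,
for nearly open continuous maps. -/
lemma dense_preimage {X Y : Type u} [TopologicalSpace X] [TopologicalSpace Y] {f : X → Y}
    (hc : Continuous f) (hno : IsNearlyOpenMap f) (G : Set Y) (hG : IsOpen G) :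
    f ⁻¹' interior (closure G) ⊆ closure (f ⁻¹' G) := by
  intro y hy
  rw [mem_closure_iff]
  intro O hO hyO
  set H := O ∩ f ⁻¹' interior (closure G) with hH
  have hHo : IsOpen H := hO.inter (isOpen_interior.preimage hc)
  have hyH : y ∈ H := ⟨hyO, hy⟩
  have h1 : f '' H ⊆ interior (closure (f '' H)) := hno H hHo
  have hfy : f y ∈ interior (closure (f '' H)) := h1 ⟨y, hyH, rfl⟩
  have hfycl : f y ∈ closure G := interior_subset hy
  obtain ⟨g, hg1, hg2⟩ := mem_closure_iff.mp hfycl _ isOpen_interior hfy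
  have hgcl : g ∈ closure (f '' H) := interior_subset hg1
  obtain ⟨w, ⟨hw1, hw2⟩, x, hxH, hxw⟩ :=
    mem_closure_iff.mp hgcl (interior (closure (f '' H)) ∩ G)
      (isOpen_interior.inter hG) ⟨hg1, hg2⟩
  exact ⟨x, hxH.1, by rw [Set.mem_preimage, hxw]; exact hw2⟩

variable (A : Set (∀ α : {o : Ordinal.{u} // o < τ}, S.X α.1))

lemma consis (hA : S.IsALim A) (u : ↥A) {γ β : Ordinal.{u}} (h : γ ≤ β) (hβ : β < τ) :
    S.p γ β h (u.1 ⟨β, hβ⟩) = u.1 ⟨γ, lt_of_le_of_lt h hβ⟩ :=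
  hA.1 u.2 ⟨γ, lt_of_le_of_lt h hβ⟩ ⟨β, hβ⟩ h

/-- membership of a point of `A` in an accumulated box reduces to coordinatewise
`cSet`-memberships. -/
lemma mem_InDset_iff_A (hA : S.IsALim A) (u : ↥A) {top γ : Ordinal.{u}} (hγtop : γ ≤ top)
    (hγτ : γ < τ) (W : Set (S.X top)) (J : Finset Ordinal.{u}) :
    u.1 ⟨γ, hγτ⟩ ∈ InDset S top γ hγtop W J ↔
      ∀ δ ∈ J, ∀ hδγ : δ ≤ γ,
        u.1 ⟨δ, lt_of_le_of_lt hδγ hγτ⟩ ∈ cSet S top δ (hδγ.trans hγtop) W := by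
  rw [mem_InDset]
  refine forall₂_congr fun δ hδ => forall_congr' fun hδγ => ?_
  rw [consis S A hA u hδγ hγτ]

/-- any point of `A` lying over `W` at level `top` lies in every `cSet` below. -/
lemma mem_cSet_of_A
    (hno : ∀ (a b : Ordinal.{u}) (h : a ≤ b), b < τ →
      Continuous (S.p a b h) ∧ IsNearlyOpenMap (S.p a b h))
    (hA : S.IsALim A) (u : ↥A) {top : Ordinal.{u}} (htop : top < τ) {W : Set (S.X top)}
    (hW : IsOpen W) (hu : u.1 ⟨top, htop⟩ ∈ W) {δ : Ordinal.{u}} (hδ : δ ≤ top) :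
    u.1 ⟨δ, lt_of_le_of_lt hδ htop⟩ ∈ cSet S top δ hδ W := by
  have : S.p δ top hδ (u.1 ⟨top, htop⟩) ∈ S.p δ top hδ '' W := ⟨_, hu, rfl⟩
  rw [consis S A hA u hδ htop] at this
  exact (hno δ top hδ htop).2 W hW this

/-- from a point of the closure of the image of `W` inside an open set `O`, produce a point
of `A` over `W` whose `γ`-coordinate lies in `O`. -/
lemma pick (hA : S.IsALim A) {top : Ordinal.{u}} (htop : top < τ) {W : Set (S.X top)}
    {γ : Ordinal.{u}} (hγ : γ ≤ top) {O : Set (S.X γ)} (hO : IsOpen O) {o : S.X γ}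
    (hoO : o ∈ O) (hocl : o ∈ closure (S.p γ top hγ '' W)) :
    ∃ u : ↥A, u.1 ⟨top, htop⟩ ∈ W ∧ u.1 ⟨γ, lt_of_le_of_lt hγ htop⟩ ∈ O := by
  obtain ⟨-, hmem, w, hwW, rfl⟩ := mem_closure_iff.mp hocl O hO hoO
  obtain ⟨u, hu⟩ := hA.2 top htop w
  have hu' : u.1 ⟨top, htop⟩ = w := hu
  refine ⟨u, by rw [hu']; exact hwW, ?_⟩
  rw [← consis S A hA u hγ htop, hu']
  exact hmem

/-- single-coordinate cylinders form a basis for subsets of inverse limits. -/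
lemma cyl_basis (γ : Ordinal.{u}) (hγ0 : 0 < γ)
    (B : Set (∀ α : {o : Ordinal.{u} // o < γ}, S.X α.1))
    (hB : ∀ f ∈ B, ∀ (a b : {o : Ordinal.{u} // o < γ}) (h : a.1 ≤ b.1),
      S.p a.1 b.1 h (f b) = f a)
    (O : Set (∀ α : {o : Ordinal.{u} // o < γ}, S.X α.1)) (hO : IsOpen O)
    (f : ∀ α : {o : Ordinal.{u} // o < γ}, S.X α.1) (hfB : f ∈ B) (hfO : f ∈ O) :
    ∃ β, ∃ hβ : β < γ, ∃ W : Set (S.X β), IsOpen W ∧ f ⟨β, hβ⟩ ∈ W ∧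
      ∀ g ∈ B, g ⟨β, hβ⟩ ∈ W → g ∈ O := by
  obtain ⟨I, uu, hIu, hpi⟩ := isOpen_pi_iff.mp hO f hfO
  rcases I.eq_empty_or_nonempty with hI | hI
  · refine ⟨0, hγ0, Set.univ, isOpen_univ, trivial, fun g _ _ => hpi fun a ha => ?_⟩
    rw [hI] at ha
    exact absurd ha (by simp)
  · have hFne : (I.image Subtype.val).Nonempty := hI.image _
    set β := (I.image Subtype.val).max' hFne with hβdef
    have hβmem := Finset.max'_mem _ hFne
    obtain ⟨a₁, ha₁I, ha₁v⟩ := Finset.mem_image.mp hβmem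
    have hβ : β < γ := by rw [hβdef, ← ha₁v]; exact a₁.2
    have hle : ∀ a ∈ I, a.1 ≤ β := fun a ha =>
      Finset.le_max' _ a.1 (Finset.mem_image_of_mem _ ha)
    refine ⟨β, hβ, ⋂ a ∈ I, ⋂ (h : a.1 ≤ β), S.p a.1 β h ⁻¹' uu a, ?_, ?_, ?_⟩
    · refine I.finite_toSet.isOpen_biInter fun a ha => ?_
      exact isOpen_iInter_of_finite fun h => ((hIu a ha).1).preimage (S.p_cont a.1 β h)
    · simp only [Set.mem_iInter, Set.mem_preimage]
      intro a ha h
      rw [show S.p a.1 β h (f ⟨β, hβ⟩) = f a from hB f hfB a ⟨β, hβ⟩ h]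
      exact (hIu a ha).2
    · intro g hgB hgW
      refine hpi fun a ha => ?_
      simp only [Set.mem_iInter] at hgW
      have := hgW a ha (hle a ha)
      rw [Set.mem_preimage] at this
      rwa [show S.p a.1 β (hle a ha) (g ⟨β, hβ⟩) = g a from hB g hgB a ⟨β, hβ⟩ (hle a ha)]
        at this

lemma exists_good
    (hno : ∀ (a b : Ordinal.{u}) (h : a ≤ b), b < τ →
      Continuous (S.p a b h) ∧ IsNearlyOpenMap (S.p a b h))
    (hac : S.AlmostContinuous) :
    ∀ α : Ordinal.{u}, ∀ hα : α < τ, ∀ W : Set (S.X α), IsOpen W → ∀ x, x ∈ W →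
      ∃ W₀ : Set (S.X α), ∃ J : Finset Ordinal.{u}, IsOpen W₀ ∧ x ∈ W₀ ∧ W₀ ⊆ W ∧
        (∀ δ ∈ J, δ < α) ∧ Good S α W₀ J := by
  intro α
  induction α using Ordinal.induction with
  | _ α IH =>
  intro hα W hW x hx
  rcases Ordinal.zero_or_succ_or_isSuccLimit α with h0 | ⟨δ, hsucc⟩ | hlim
  · subst h0
    exact ⟨W, ∅, hW, hx, subset_rfl, by simp,
      fun γ hγ _ => absurd hγ (zero_le (a := γ)).not_gt⟩
  · -- successor case
    subst hsucc
    have hδα : δ ≤ succ δ := Order.le_succ δ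
    have hδsucc : δ < succ δ := Order.lt_succ δ
    have hδτ : δ < τ := hδsucc.trans hα
    have hy : S.p δ (succ δ) hδα x ∈ interior (closure (S.p δ (succ δ) hδα '' W)) :=
      (hno δ (succ δ) hδα hα).2 W hW ⟨x, hx, rfl⟩
    obtain ⟨G, JG, hGopen, hyG, hGsub, hJG, hGood⟩ :=
      IH δ hδsucc hδτ _ isOpen_interior _ hy
    refine ⟨W ∩ S.p δ (succ δ) hδα ⁻¹' G, insert δ JG,
      hW.inter (hGopen.preimage (S.p_cont _ _ _)), ⟨hx, hyG⟩, Set.inter_subset_left, ?_, ?_⟩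
    · intro δ' hδ'
      rcases Finset.mem_insert.mp hδ' with h | h
      · exact h ▸ hδsucc
      · exact (hJG δ' h).trans hδsucc
    · -- goodness
      have hTsub : S.p δ (succ δ) hδα '' (W ∩ S.p δ (succ δ) hδα ⁻¹' G) ⊆ G := by
        rintro _ ⟨w, ⟨hw1, hw2⟩, rfl⟩; exact hw2
      have hGcl : G ⊆ closure (S.p δ (succ δ) hδα '' (W ∩ S.p δ (succ δ) hδα ⁻¹' G)) := by
        intro o hoG
        rw [mem_closure_iff]
        intro O hOo hoO
        have ho' : o ∈ closure (S.p δ (succ δ) hδα '' W) := interior_subset (hGsub hoG)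
        obtain ⟨-, ⟨hmo, hmG⟩, w, hwW, rfl⟩ :=
          mem_closure_iff.mp ho' (O ∩ G) (hOo.inter hGopen) ⟨hoO, hoG⟩
        exact ⟨_, hmo, w, ⟨hwW, hmG⟩, rfl⟩
      have hclphi : ∀ δ' (hδ' : δ' ≤ δ),
          closure (S.p δ' (succ δ) (hδ'.trans hδα) '' (W ∩ S.p δ (succ δ) hδα ⁻¹' G)) =
            closure (S.p δ' δ hδ' '' G) := by
        intro δ' hδ'
        rw [img_comp S δ' δ (succ δ) hδ' hδα]
        apply subset_antisymm
        · exact closure_mono (Set.image_mono hTsub)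
        · refine closure_minimal ?_ isClosed_closure
          rintro _ ⟨g, hgG, rfl⟩
          have h1 : g ∈ closure (S.p δ (succ δ) hδα '' (W ∩ S.p δ (succ δ) hδα ⁻¹' G)) :=
            hGcl hgG
          exact image_closure_subset_closure_image (S.p_cont δ' δ hδ') ⟨g, h1, rfl⟩
      intro γ hγα' hγJ₀
      have hγδ : γ < δ := lt_of_le_of_ne (Order.lt_succ_iff.mp hγα')
        (fun h => hγJ₀ (h ▸ Finset.mem_insert_self δ JG))
      have hγJG : γ ∉ JG := fun h => hγJ₀ (Finset.mem_insert_of_mem h)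
      intro y hy
      have hy' : y ∈ InDset S δ γ hγδ.le G JG := by
        rw [mem_InDset] at hy ⊢
        intro δ' hδ' hδ'γ
        have h1 := hy δ' (Finset.mem_insert_of_mem hδ') hδ'γ
        have he : cSet S (succ δ) δ' (hδ'γ.trans hγα'.le) (W ∩ S.p δ (succ δ) hδα ⁻¹' G) =
            cSet S δ δ' (hδ'γ.trans hγδ.le) G := by
          unfold cSet
          exact congrArg interior (hclphi δ' (hδ'γ.trans hγδ.le))
        exact he ▸ h1
      have h2 := hGood γ hγδ hγJG hy'
      have he2 : closure (S.p γ (succ δ) hγα'.le '' (W ∩ S.p δ (succ δ) hδα ⁻¹' G)) =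
          closure (S.p γ δ hγδ.le '' G) := hclphi γ hγδ.le
      rw [he2]
      exact h2
  · -- limit case
    obtain ⟨hemb, -⟩ := hac α hα hlim
    obtain ⟨Ω, hΩ, hΩpre⟩ := hemb.toIsInducing.isOpen_iff.mp hW
    obtain ⟨O, hOopen, hOpre⟩ := isOpen_induced_iff.mp hΩ
    have hdx : S.diag α x ∈ Ω := by rw [← hΩpre] at hx; exact hx
    have hfO : (S.diag α x).1 ∈ O := by rw [← hOpre] at hdx; exact hdx
    obtain ⟨γ₀, hγ₀α, G', hG'open, hfG', hG'sub⟩ :=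
      cyl_basis S α hlim.pos (S.lim α) (fun f hf => hf) O hOopen
        (S.diag α x).1 (S.diag α x).2 hfO
    have hfG'' : S.p γ₀ α hγ₀α.le x ∈ G' := hfG'
    obtain ⟨G, JG, hGopen, hxG, hGsub, hJG, hGood⟩ :=
      IH γ₀ hγ₀α (hγ₀α.trans hα) G' hG'open _ hfG''
    have hcylW : S.p γ₀ α hγ₀α.le ⁻¹' G' ⊆ W := by
      intro y hy
      have h1 : (S.diag α y).1 ∈ O := hG'sub (S.diag α y).1 (S.diag α y).2 hy
      have h2 : S.diag α y ∈ Ω := by rw [← hOpre]; exact h1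
      rw [← hΩpre]; exact h2
    have himgtop : S.p γ₀ α hγ₀α.le '' (S.p γ₀ α hγ₀α.le ⁻¹' G) = G :=
      Set.image_preimage_eq _ (S.p_surj γ₀ α hγ₀α.le hα)
    refine ⟨S.p γ₀ α hγ₀α.le ⁻¹' G, insert γ₀ JG,
      hGopen.preimage (S.p_cont _ _ _), hxG,
      fun y hy => hcylW (hGsub hy), ?_, ?_⟩
    · intro δ' hδ'
      rcases Finset.mem_insert.mp hδ' with h | h
      · exact h ▸ hγ₀α
      · exact (hJG δ' h).trans hγ₀α
    · -- goodness
      intro γ hγα' hγJ₀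
      have hγne : γ ≠ γ₀ := fun h => hγJ₀ (h ▸ Finset.mem_insert_self _ _)
      have hγJG : γ ∉ JG := fun h => hγJ₀ (Finset.mem_insert_of_mem h)
      rcases lt_or_gt_of_ne hγne with hlt | hgt
      · -- γ < γ₀
        have himg : ∀ δ' (hδ' : δ' ≤ γ₀),
            S.p δ' α (hδ'.trans hγ₀α.le) '' (S.p γ₀ α hγ₀α.le ⁻¹' G) =
              S.p δ' γ₀ hδ' '' G := by
          intro δ' hδ'
          rw [img_comp S δ' γ₀ α hδ' hγ₀α.le, himgtop]
        intro y hy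
        have hy' : y ∈ InDset S γ₀ γ hlt.le G JG := by
          rw [mem_InDset] at hy ⊢
          intro δ' hδ' hδ'γ
          have h1 := hy δ' (Finset.mem_insert_of_mem hδ') hδ'γ
          have he : cSet S α δ' (hδ'γ.trans hγα'.le) (S.p γ₀ α hγ₀α.le ⁻¹' G) =
              cSet S γ₀ δ' (hδ'γ.trans hlt.le) G := by
            unfold cSet
            exact congrArg interior (congrArg closure (himg δ' (hδ'γ.trans hlt.le)))
          exact he ▸ h1
        have h2 := hGood γ hlt hγJG hy'
        have he2 : S.p γ α hγα'.le '' (S.p γ₀ α hγ₀α.le ⁻¹' G) = S.p γ γ₀ hlt.le '' G :=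
          himg γ hlt.le
        rw [he2]
        exact h2
      · -- γ₀ < γ
        have hW₀eq : S.p γ₀ α hγ₀α.le ⁻¹' G =
            S.p γ α hγα'.le ⁻¹' (S.p γ₀ γ hgt.le ⁻¹' G) :=
          pre_comp S γ₀ γ α hgt.le hγα'.le G
        have he3 : S.p γ α hγα'.le '' (S.p γ₀ α hγ₀α.le ⁻¹' G) =
            S.p γ₀ γ hgt.le ⁻¹' G := by
          rw [hW₀eq]
          exact Set.image_preimage_eq _ (S.p_surj γ α hγα'.le hα)
        intro y hy
        have h1 := (mem_InDset S).mp hy γ₀ (Finset.mem_insert_self _ _) hgt.le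
        have h1' : S.p γ₀ γ hgt.le y ∈ interior (closure G) := by
          have he4 : cSet S α γ₀ (hgt.le.trans hγα'.le) (S.p γ₀ α hγ₀α.le ⁻¹' G) =
              interior (closure G) := by
            unfold cSet
            exact congrArg interior (congrArg closure himgtop)
          exact he4 ▸ h1
        have h2 := dense_preimage (S.p_cont γ₀ γ hgt.le)
          ((hno γ₀ γ hgt.le (hγα'.trans hα)).2) G hGopen h1'
        rw [he3]
        exact h2

lemma exists_bound (T : Finset Ordinal.{u}) (γ : Ordinal.{u}) :
    (∀ δ ∈ T, ¬ δ < γ) ∨ ∃ γ₀, γ₀ < γ ∧ ∀ δ ∈ T, δ < γ → δ ≤ γ₀ := by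
  induction T using Finset.induction_on with
  | empty => exact Or.inl (by simp)
  | @insert a T hna IH =>
    rcases IH with h | ⟨γ₀, hγ₀, hb⟩
    · by_cases haγ : a < γ
      · refine Or.inr ⟨a, haγ, fun δ hδ hδγ => ?_⟩
        rcases Finset.mem_insert.mp hδ with rfl | hm
        · exact le_rfl
        · exact absurd hδγ (h δ hm)
      · refine Or.inl fun δ hδ hδγ => ?_
        rcases Finset.mem_insert.mp hδ with rfl | hm
        · exact haγ hδγ
        · exact h δ hm hδγ
    · by_cases haγ : a < γ
      · refine Or.inr ⟨max a γ₀, max_lt haγ hγ₀, fun δ hδ hδγ => ?_⟩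
        rcases Finset.mem_insert.mp hδ with rfl | hm
        · exact le_max_left _ _
        · exact (hb δ hm hδγ).trans (le_max_right _ _)
      · refine Or.inr ⟨γ₀, hγ₀, fun δ hδ hδγ => ?_⟩
        rcases Finset.mem_insert.mp hδ with rfl | hm
        · exact absurd hδγ haγ
        · exact hb δ hm hδγ

lemma pair_lemma (hA : S.IsALim A)
    (hno : ∀ (a b : Ordinal.{u}) (h : a ≤ b), b < τ →
      Continuous (S.p a b h) ∧ IsNearlyOpenMap (S.p a b h))
    {α β : Ordinal.{u}} (hα : α < τ) (hβ : β < τ) (hαβ : α < β)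
    {W₁ : Set (S.X α)} {W₂ : Set (S.X β)} (hW₁ : IsOpen W₁) (hW₂ : IsOpen W₂)
    {J₁ J₂ : Finset Ordinal.{u}} (hJ₁ : ∀ δ ∈ J₁, δ < α) (hJ₂ : ∀ δ ∈ J₂, δ < β)
    (good₁ : Good S α W₁ J₁) (good₂ : Good S β W₂ J₂)
    {z : ∀ a : {o : Ordinal.{u} // o < τ}, S.X a.1}
    (hz₁ : z ∈ BoxSet S α hα W₁ J₁) (hz₂ : z ∈ BoxSet S β hβ W₂ J₂) :
    ∃ u : ↥A, u.1 ⟨α, hα⟩ ∈ W₁ ∧ u.1 ⟨β, hβ⟩ ∈ W₂ := by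
  rw [mem_BoxSet] at hz₁ hz₂
  obtain ⟨⟨hz₁W, hz₁D⟩, hz₁J⟩ := hz₁
  obtain ⟨⟨hz₂W, hz₂D⟩, hz₂J⟩ := hz₂
  -- base points of A over W₁ and W₂
  obtain ⟨u₀, hu₀⟩ := hA.2 α hα (z ⟨α, hα⟩)
  have hu₀W : u₀.1 ⟨α, hα⟩ ∈ W₁ := by
    have : u₀.1 ⟨α, hα⟩ = z ⟨α, hα⟩ := hu₀
    rw [this]; exact hz₁W
  obtain ⟨v₀, hv₀⟩ := hA.2 β hβ (z ⟨β, hβ⟩)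
  have hv₀W : v₀.1 ⟨β, hβ⟩ ∈ W₂ := by
    have : v₀.1 ⟨β, hβ⟩ = z ⟨β, hβ⟩ := hv₀
    rw [this]; exact hz₂W
  -- automatic memberships in accumulated boxes for points of A lying over the tops
  have autoC₁ : ∀ w : ↥A, w.1 ⟨α, hα⟩ ∈ W₁ → ∀ (γ' : Ordinal.{u}) (hγ' : γ' ≤ α),
      w.1 ⟨γ', lt_of_le_of_lt hγ' hα⟩ ∈ InDset S α γ' hγ' W₁ J₁ := by
    intro w hw γ' hγ'
    rw [mem_InDset_iff_A S A hA]
    intro δ hδ hδγ'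
    exact mem_cSet_of_A S A hno hA w hα hW₁ hw (hδγ'.trans hγ')
  have autoC₂ : ∀ w : ↥A, w.1 ⟨β, hβ⟩ ∈ W₂ → ∀ (γ' : Ordinal.{u}) (hγ' : γ' ≤ β),
      w.1 ⟨γ', lt_of_le_of_lt hγ' hβ⟩ ∈ InDset S β γ' hγ' W₂ J₂ := by
    intro w hw γ' hγ'
    rw [mem_InDset_iff_A S A hA]
    intro δ hδ hδγ'
    exact mem_cSet_of_A S A hno hA w hβ hW₂ hw (hδγ'.trans hγ')
  -- the walk
  have walk : ∀ γ : Ordinal.{u}, γ < α →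
      (∃ u : ↥A, u.1 ⟨α, hα⟩ ∈ W₁ ∧ ∀ (δ : Ordinal.{u}) (hδ : δ ∈ J₂), δ ≤ γ →
        u.1 ⟨δ, (hJ₂ δ hδ).trans hβ⟩ ∈ cSet S β δ (hJ₂ δ hδ).le W₂) ∧
      (∃ v : ↥A, v.1 ⟨β, hβ⟩ ∈ W₂ ∧ ∀ (δ : Ordinal.{u}) (hδ : δ ∈ J₁), δ ≤ γ →
        v.1 ⟨δ, (hJ₁ δ hδ).trans hα⟩ ∈ cSet S α δ (hJ₁ δ hδ).le W₁) := by
    intro γ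
    induction γ using Ordinal.induction with
    | _ γ IH =>
    intro hγα
    have hγβ : γ < β := hγα.trans hαβ
    have hγτ : γ < τ := hγα.trans hα
    -- previous-level witnesses ignoring a possible milestone at γ itself
    have hpointed : (∃ u : ↥A, u.1 ⟨α, hα⟩ ∈ W₁ ∧ ∀ (δ : Ordinal.{u}) (hδ : δ ∈ J₂),
          δ ≤ γ → δ ≠ γ → u.1 ⟨δ, (hJ₂ δ hδ).trans hβ⟩ ∈ cSet S β δ (hJ₂ δ hδ).le W₂) ∧
        (∃ v : ↥A, v.1 ⟨β, hβ⟩ ∈ W₂ ∧ ∀ (δ : Ordinal.{u}) (hδ : δ ∈ J₁),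
          δ ≤ γ → δ ≠ γ → v.1 ⟨δ, (hJ₁ δ hδ).trans hα⟩ ∈ cSet S α δ (hJ₁ δ hδ).le W₁) := by
      rcases exists_bound (J₁ ∪ J₂) γ with hnone | ⟨γ₀, hγ₀γ, hprev⟩
      · constructor
        · exact ⟨u₀, hu₀W, fun δ hδ hδγ hne =>
            absurd (lt_of_le_of_ne hδγ hne) (hnone δ (Finset.mem_union_right _ hδ))⟩
        · exact ⟨v₀, hv₀W, fun δ hδ hδγ hne =>
            absurd (lt_of_le_of_ne hδγ hne) (hnone δ (Finset.mem_union_left _ hδ))⟩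
      · obtain ⟨⟨u', hu'W, hu'C⟩, ⟨v', hv'W, hv'C⟩⟩ := IH γ₀ hγ₀γ (hγ₀γ.trans hγα)
        constructor
        · exact ⟨u', hu'W, fun δ hδ hδγ hne =>
            hu'C δ hδ (hprev δ (Finset.mem_union_right _ hδ) (lt_of_le_of_ne hδγ hne))⟩
        · exact ⟨v', hv'W, fun δ hδ hδγ hne =>
            hv'C δ hδ (hprev δ (Finset.mem_union_left _ hδ) (lt_of_le_of_ne hδγ hne))⟩
    obtain ⟨⟨u', hu'W, hu'C⟩, ⟨v', hv'W, hv'C⟩⟩ := hpointed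
    -- the common open set at level γ
    set O : Set (S.X γ) := InDset S α γ hγα.le W₁ J₁ ∩ InDset S β γ hγβ.le W₂ J₂ with hOdef
    have hOopen : IsOpen O := (isOpen_InDset S α γ hγα.le W₁ J₁).inter
      (isOpen_InDset S β γ hγβ.le W₂ J₂)
    -- a candidate element of O, available whenever γ is a milestone of one of the sides
    have hcand : (γ ∈ J₁ ∨ γ ∈ J₂) → ∃ o : S.X γ, o ∈ O := by
      intro hcase
      by_cases hγJ₁ : γ ∈ J₁
      · by_cases hγJ₂ : γ ∈ J₂
        · exact ⟨z ⟨γ, hγτ⟩, hz₁J γ hγJ₁ hγα, hz₂J γ hγJ₂ hγβ⟩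
        · -- candidate: u' (previous witness over W₁)
          refine ⟨u'.1 ⟨γ, hγτ⟩, autoC₁ u' hu'W γ hγα.le, ?_⟩
          rw [mem_InDset_iff_A S A hA]
          intro δ hδ hδγ
          have hne : δ ≠ γ := fun h => hγJ₂ (h ▸ hδ)
          exact hu'C δ hδ hδγ hne
      · -- candidate: v' (previous witness over W₂)
        refine ⟨v'.1 ⟨γ, hγτ⟩, ?_, autoC₂ v' hv'W γ hγβ.le⟩
        rw [mem_InDset_iff_A S A hA]
        intro δ hδ hδγ
        have hne : δ ≠ γ := fun h => hγJ₁ (h ▸ hδ)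
        exact hv'C δ hδ hδγ hne
    constructor
    · -- the u-side
      by_cases hγJ₂ : γ ∈ J₂
      · obtain ⟨o, hoO⟩ := hcand (Or.inr hγJ₂)
        have hocl : o ∈ closure (S.p γ α hγα.le '' W₁) := dens S good₁ γ hγα hoO.1
        obtain ⟨u, huW, huO⟩ := pick S A hA hα hγα.le hOopen hoO hocl
        refine ⟨u, huW, fun δ hδ hδγ => ?_⟩
        exact (mem_InDset_iff_A S A hA u hγβ.le hγτ W₂ J₂).mp huO.2 δ hδ hδγ
      · refine ⟨u', hu'W, fun δ hδ hδγ => ?_⟩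
        exact hu'C δ hδ hδγ (fun h => hγJ₂ (h ▸ hδ))
    · -- the v-side
      by_cases hγJ₁ : γ ∈ J₁
      · obtain ⟨o, hoO⟩ := hcand (Or.inl hγJ₁)
        have hocl : o ∈ closure (S.p γ β hγβ.le '' W₂) := dens S good₂ γ hγβ hoO.2
        obtain ⟨v, hvW, hvO⟩ := pick S A hA hβ hγβ.le hOopen hoO hocl
        refine ⟨v, hvW, fun δ hδ hδγ => ?_⟩
        exact (mem_InDset_iff_A S A hA v hγα.le hγτ W₁ J₁).mp hvO.1 δ hδ hδγ
      · refine ⟨v', hv'W, fun δ hδ hδγ => ?_⟩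
        exact hv'C δ hδ hδγ (fun h => hγJ₁ (h ▸ hδ))
  -- final step at level α
  have hfin : ∃ u : ↥A, u.1 ⟨α, hα⟩ ∈ W₁ ∧ ∀ (δ : Ordinal.{u}) (hδ : δ ∈ J₂), δ < α →
      u.1 ⟨δ, (hJ₂ δ hδ).trans hβ⟩ ∈ cSet S β δ (hJ₂ δ hδ).le W₂ := by
    rcases exists_bound (J₁ ∪ J₂) α with hnone | ⟨γ₀, hγ₀α, hprev⟩
    · exact ⟨u₀, hu₀W, fun δ hδ hδα =>
        absurd hδα (hnone δ (Finset.mem_union_right _ hδ))⟩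
    · obtain ⟨⟨u', hu'W, hu'C⟩, -⟩ := walk γ₀ hγ₀α
      exact ⟨u', hu'W, fun δ hδ hδα =>
        hu'C δ hδ (hprev δ (Finset.mem_union_right _ hδ) hδα)⟩
  obtain ⟨ustar, hustarW, hustarC⟩ := hfin
  -- the decisive open set at level α
  set O : Set (S.X α) := W₁ ∩ InDset S β α hαβ.le W₂ J₂ with hOdef
  have hOopen : IsOpen O := hW₁.inter (isOpen_InDset S β α hαβ.le W₂ J₂)
  have hcand : ∃ o : S.X α, o ∈ O := by
    by_cases hαJ₂ : α ∈ J₂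
    · exact ⟨z ⟨α, hα⟩, hz₁W, hz₂J α hαJ₂ hαβ⟩
    · refine ⟨ustar.1 ⟨α, hα⟩, hustarW, ?_⟩
      rw [mem_InDset_iff_A S A hA]
      intro δ hδ hδα
      exact hustarC δ hδ (lt_of_le_of_ne hδα (fun h => hαJ₂ (h ▸ hδ)))
  obtain ⟨o, hoO⟩ := hcand
  have hocl : o ∈ closure (S.p α β hαβ.le '' W₂) := dens S good₂ α hαβ hoO.2
  obtain ⟨v, hvW, hvO⟩ := pick S A hA hβ hαβ.le hOopen hoO hocl
  exact ⟨v, hvO.1, hvW⟩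

/-- The regular-embedding extension operator. -/
def eSet (U : Set ↥A) : Set (∀ a : {o : Ordinal.{u} // o < τ}, S.X a.1) :=
  ⋃ (α : Ordinal.{u}) (hα : α < τ) (W : Set (S.X α)) (J : Finset Ordinal.{u})
    (_ : IsOpen W ∧ (∀ δ ∈ J, δ < α) ∧ Good S α W J ∧ S.proj A α hα ⁻¹' W ⊆ U),
    BoxSet S α hα W J

lemma isOpen_eSet (U : Set ↥A) : IsOpen (eSet S A U) := by
  refine isOpen_iUnion fun α => isOpen_iUnion fun hα => isOpen_iUnion fun W =>
    isOpen_iUnion fun J => isOpen_iUnion fun h => isOpen_BoxSet S α hα W h.1 J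

lemma eSet_disjoint (hA : S.IsALim A)
    (hno : ∀ (a b : Ordinal.{u}) (h : a ≤ b), b < τ →
      Continuous (S.p a b h) ∧ IsNearlyOpenMap (S.p a b h))
    (U V : Set ↥A) (hUV : U ∩ V = ∅) : eSet S A U ∩ eSet S A V = ∅ := by
  rw [Set.eq_empty_iff_forall_notMem]
  rintro z ⟨hzU, hzV⟩
  rw [Set.eq_empty_iff_forall_notMem] at hUV
  simp only [eSet, Set.mem_iUnion] at hzU hzV
  obtain ⟨α, hα, W₁, J₁, ⟨hW₁, hJ₁, good₁, hcyl₁⟩, hbox₁⟩ := hzU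
  obtain ⟨β, hβ, W₂, J₂, ⟨hW₂, hJ₂, good₂, hcyl₂⟩, hbox₂⟩ := hzV
  rcases lt_trichotomy α β with hlt | heq | hgt
  · obtain ⟨u, h1, h2⟩ := pair_lemma S A hA hno hα hβ hlt hW₁ hW₂ hJ₁ hJ₂ good₁ good₂
      hbox₁ hbox₂
    exact hUV u ⟨hcyl₁ h1, hcyl₂ h2⟩
  · subst heq
    have h1 : z ⟨α, hα⟩ ∈ W₁ := ((mem_BoxSet S).mp hbox₁).1.1
    have h2 : z ⟨α, hβ⟩ ∈ W₂ := ((mem_BoxSet S).mp hbox₂).1.1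
    obtain ⟨u, hu⟩ := hA.2 α hα (z ⟨α, hα⟩)
    have hu1 : u.1 ⟨α, hα⟩ = z ⟨α, hα⟩ := hu
    have m1 : u ∈ S.proj A α hα ⁻¹' W₁ := by
      rw [Set.mem_preimage, show S.proj A α hα u = z ⟨α, hα⟩ from hu]; exact h1
    have m2 : u ∈ S.proj A α hβ ⁻¹' W₂ := by
      rw [Set.mem_preimage, show S.proj A α hβ u = z ⟨α, hα⟩ from hu1]; exact h2
    exact hUV u ⟨hcyl₁ m1, hcyl₂ m2⟩
  · obtain ⟨u, h2, h1⟩ := pair_lemma S A hA hno hβ hα hgt hW₂ hW₁ hJ₂ hJ₁ good₂ good₁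
      hbox₂ hbox₁
    exact hUV u ⟨hcyl₁ h1, hcyl₂ h2⟩

lemma eSet_trace (hA : S.IsALim A)
    (hno : ∀ (a b : Ordinal.{u}) (h : a ≤ b), b < τ →
      Continuous (S.p a b h) ∧ IsNearlyOpenMap (S.p a b h))
    (hac : S.AlmostContinuous) (hτ0 : (0 : Ordinal.{u}) < τ)
    (U : Set ↥A) (hU : IsOpen U) : Subtype.val ⁻¹' (eSet S A U) = U := by
  apply subset_antisymm
  · intro x hx
    simp only [Set.mem_preimage, eSet, Set.mem_iUnion] at hx
    obtain ⟨α, hα, W, J, ⟨hW, hJ, good, hcyl⟩, hbox⟩ := hx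
    exact hcyl ((mem_BoxSet S).mp hbox).1.1
  · intro x hxU
    obtain ⟨O, hOopen, hOpre⟩ := isOpen_induced_iff.mp hU
    rw [← hOpre] at hxU
    obtain ⟨β, hβ, W, hWopen, hxW, htr⟩ :=
      cyl_basis S τ hτ0 A (fun f hf => hA.1 hf) O hOopen x.1 x.2 hxU
    obtain ⟨W₀, J, hW₀open, hxW₀, hW₀sub, hJ, good⟩ :=
      exists_good S hno hac β hβ W hWopen _ hxW
    have hcyl : S.proj A β hβ ⁻¹' W₀ ⊆ U := by
      intro y hy
      rw [← hOpre]
      exact htr y.1 y.2 (hW₀sub hy)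
    refine Set.mem_preimage.mpr (Set.mem_iUnion.mpr ⟨β, Set.mem_iUnion.mpr ⟨hβ,
      Set.mem_iUnion.mpr ⟨W₀, Set.mem_iUnion.mpr ⟨J, Set.mem_iUnion.mpr
        ⟨⟨hW₀open, hJ, good, hcyl⟩, ?_⟩⟩⟩⟩⟩)
    rw [mem_BoxSet]
    refine ⟨⟨hxW₀, ?_⟩, ?_⟩
    · exact (mem_InDset_iff_A S A hA x le_rfl hβ W₀ J).mpr
        (fun δ hδ hδβ => mem_cSet_of_A S A hno hA x hβ hW₀open hxW₀ hδβ)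
    · intro δ hδ hδβ
      exact (mem_InDset_iff_A S A hA x hδβ.le (hδβ.trans hβ) W₀ J).mpr
        (fun δ' hδ' hδ'δ => mem_cSet_of_A S A hno hA x hβ hW₀open hxW₀ (hδ'δ.trans hδβ.le))

end RegEmb

open Order InvSystem in
/-- For an almost continuous inverse system with nearly open bonding maps and
`A = a-lim S`, the space `A` is regularly embedded in the product `∏_{α<τ} X_α`. -/
theorem regularly_embedded_in_product {τ : Ordinal.{u}} (S : InvSystem τ)
    (A : Set (∀ α : {o : Ordinal.{u} // o < τ}, S.X α.1))
    (hac : S.AlmostContinuous)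
    (hno : ∀ (α β : Ordinal.{u}) (h : α ≤ β), β < τ →
      Continuous (S.p α β h) ∧ IsNearlyOpenMap (S.p α β h))
    (hA : S.IsALim A) :
    ∃ e : Set ↥A → Set (∀ α : {o : Ordinal.{u} // o < τ}, S.X α.1),
      (∀ U : Set ↥A, IsOpen U → IsOpen (e U)) ∧
      (∀ U V : Set ↥A, IsOpen U → IsOpen V → U ∩ V = ∅ → e U ∩ e V = ∅) ∧
      (∀ U : Set ↥A, IsOpen U → Subtype.val ⁻¹' (e U) = U) := by
  rcases eq_or_ne τ 0 with hτ | hτ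
  · -- degenerate case: the index set is empty and the product is a singleton
    have hZsub : ∀ z w : (∀ a : {o : Ordinal.{u} // o < τ}, S.X a.1), z = w := by
      intro z w
      funext a
      exact absurd (hτ ▸ a.2 : a.1 < 0) (zero_le (a := a.1)).not_gt
    refine ⟨fun U => ⋃ (_ : U.Nonempty), Set.univ,
      fun U _ => isOpen_iUnion fun _ => isOpen_univ, ?_, ?_⟩
    · intro U V _ _ hUV
      rw [Set.eq_empty_iff_forall_notMem]
      rintro z ⟨hzU, hzV⟩
      simp only [Set.mem_iUnion] at hzU hzV
      obtain ⟨⟨x, hx⟩, -⟩ := hzU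
      obtain ⟨⟨y, hy⟩, -⟩ := hzV
      rw [Set.eq_empty_iff_forall_notMem] at hUV
      have hxy : x = y := Subtype.ext (hZsub x.1 y.1)
      exact hUV x ⟨hx, hxy ▸ hy⟩
    · intro U _
      rcases U.eq_empty_or_nonempty with rfl | hne
      · simp
      · apply subset_antisymm
        · intro x _
          obtain ⟨x₀, hx₀⟩ := hne
          have hxx : x = x₀ := Subtype.ext (hZsub x.1 x₀.1)
          exact hxx ▸ hx₀
        · intro x _
          simp only [Set.mem_preimage, Set.mem_iUnion]
          exact ⟨hne, trivial⟩
  · have hτ0 : (0 : Ordinal.{u}) < τ := pos_iff_ne_zero.mpr hτ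
    exact ⟨RegEmb.eSet S A,
      fun U _ => RegEmb.isOpen_eSet S A U,
      fun U V _ _ h => RegEmb.eSet_disjoint S A hA (fun a b hab hb => hno a b hab hb) U V h,
      fun U hU => RegEmb.eSet_trace S A hA (fun a b hab hb => hno a b hab hb) hac hτ0 U hU⟩
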